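/- If ρ ∈ L¹(ℝ^d), ρ ≥ 0, ∫ρ = N, and ρ has finite first moment ∫|r|ρ(r)dr < ∞, then for every probability density π ∈ L¹(ℝ^{dN}) with all marginals equal to ρ/N, the negative part of π log π has finite integral; more precisely ∫(π log π)_− ≥ −A_ρ where A_ρ = C(∫e^{−|r|/2}dr)^N + ∫|r|ρ(r)dr depends only on ρ. -/

import Mathlib

open MeasureTheory
open scoped ENNReal

lemma aux_zlogz {z : ℝ} (h0 : 0 ≤ z) (h1 : z ≤ 1) :
    |z * Real.log z| ≤ 2 * Real.sqrt z := by
  rcases eq_or_lt_of_le h0 with rfl | hz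
  · simp
  · have hlz : Real.log z ≤ 0 := Real.log_nonpos h0 h1
    have hsz : 0 < Real.sqrt z := Real.sqrt_pos.2 hz
    have hlog : Real.log (√z) ≤ √z - 1 := Real.log_le_sub_one_of_pos hsz
    have hinv : Real.log (√z)⁻¹ ≤ (√z)⁻¹ - 1 := Real.log_le_sub_one_of_pos (by positivity)
    rw [Real.log_inv] at hinv
    have hkey : -Real.log z ≤ 2 / √z := by
      rw [show Real.log z = 2 * Real.log (√z) by rw [Real.log_sqrt h0]; ring]
      have : (√z)⁻¹ - 1 ≤ (√z)⁻¹ := by linarith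
      calc -(2 * Real.log (√z)) = 2 * (-Real.log (√z)) := by ring
        _ ≤ 2 * ((√z)⁻¹) := by linarith
        _ = 2 / √z := by rw [div_eq_mul_inv]
    have habs : |z * Real.log z| = z * (-Real.log z) := by
      rw [abs_of_nonpos (mul_nonpos_of_nonneg_of_nonpos h0 hlz)]; ring
    rw [habs]
    calc z * (-Real.log z) ≤ z * (2 / √z) := by
          apply mul_le_mul_of_nonneg_left hkey h0
      _ = 2 * (z / √z) := by ring
      _ = 2 * √z := by rw [Real.div_sqrt]

lemma aux_sqrt_exp (s : ℝ) : Real.sqrt (Real.exp (-s)) = Real.exp (-s / 2) := by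
  rw [show Real.exp (-s) = Real.exp (-s/2) * Real.exp (-s/2) by rw [← Real.exp_add]; ring_nf,
    Real.sqrt_mul_self (Real.exp_pos _).le]

lemma aux_point {p s : ℝ} (hp : 0 ≤ p) (hs : 0 ≤ s) :
    -min (p * Real.log p) 0 ≤ 2 * Real.exp (-s / 2) + p * s := by
  have hrhs : 0 ≤ 2 * Real.exp (-s/2) + p * s := by positivity
  rw [show -min (p * Real.log p) 0 = max (-(p * Real.log p)) 0 by
    rw [← max_neg_neg, neg_zero]]
  refine max_le ?_ hrhs
  rcases le_or_gt p (Real.exp (-s)) with h | h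
  · have hp1 : p ≤ 1 := h.trans (Real.exp_le_one_iff.2 (by linarith))
    have h1 := aux_zlogz hp hp1
    have h2 : Real.sqrt p ≤ Real.exp (-s/2) := by
      rw [← aux_sqrt_exp]; exact Real.sqrt_le_sqrt h
    have h3 := neg_abs_le (p * Real.log p)
    nlinarith [mul_nonneg hp hs]
  · have hp0 : 0 < p := lt_trans (Real.exp_pos _) h
    have hlog : -s ≤ Real.log p := (Real.le_log_iff_exp_le hp0).2 h.le
    have : -(p * Real.log p) = p * (-Real.log p) := by ring
    have h2 : p * (-Real.log p) ≤ p * s := mul_le_mul_of_nonneg_left (by linarith) hp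
    nlinarith [Real.exp_pos (-s/2)]

lemma aux_exp_integrable (d : ℕ) :
    Integrable (fun r : EuclideanSpace ℝ (Fin d) => Real.exp (-‖r‖ / 2)) := by
  set E := EuclideanSpace ℝ (Fin d)
  set r : ℝ := Module.finrank ℝ E + 1 with hr
  have hr1 : (1 : ℝ) ≤ r := by
    have : (0:ℝ) ≤ Module.finrank ℝ E := Nat.cast_nonneg _
    simp [hr]
  have hr0 : 0 < r := by linarith
  have hnr : (Module.finrank ℝ E : ℝ) < r := by simp [hr]
  have hbase : Integrable (fun x : E => (2*r)^r * (1 + ‖x‖) ^ (-r)) :=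
    (integrable_one_add_norm hnr).const_mul _
  refine hbase.mono' (Measurable.aestronglyMeasurable (by fun_prop)) ?_
  filter_upwards with x
  set t : ℝ := ‖x‖ with ht
  have htnn : 0 ≤ t := norm_nonneg _
  rw [Real.norm_eq_abs, abs_of_pos (Real.exp_pos _)]
  -- key: (1+t)^r ≤ (2r)^r * exp(t/2)
  have h1 : 1 + t ≤ 2*r * Real.exp (t / (2*r)) := by
    have := Real.add_one_le_exp (t / (2*r))
    have h2 : 2*r * (t/(2*r) + 1) = t + 2*r := by field_simp
    nlinarith
  have hA : (1 + t) ^ r ≤ (2*r)^r * Real.exp (t/2) := by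
    calc (1 + t) ^ r ≤ (2*r * Real.exp (t/(2*r))) ^ r :=
          Real.rpow_le_rpow (by linarith) h1 hr0.le
      _ = (2*r)^r * (Real.exp (t/(2*r)))^r := Real.mul_rpow (by linarith) (Real.exp_pos _).le
      _ = (2*r)^r * Real.exp (t/2) := by
          rw [Real.rpow_def_of_pos (Real.exp_pos _), Real.log_exp]
          congr 1
          field_simp
  have hApos : 0 < (1 + t) ^ r := Real.rpow_pos_of_pos (by linarith) _
  have hC0 : 0 < (2*r : ℝ)^r := Real.rpow_pos_of_pos (by linarith) _
  have hB : 0 < Real.exp (t/2) := Real.exp_pos _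
  rw [Real.rpow_neg (by linarith : (0:ℝ) ≤ 1 + t), show -t/2 = -(t/2) by ring, Real.exp_neg,
    ← div_eq_mul_inv, le_div_iff₀ hApos, inv_mul_le_iff₀ hB]
  linarith


/-- **Well-definedness of the entropy: finite-first-moment bound on the negative part.**
If `ρ ∈ L¹(ℝ^d)`, `ρ ≥ 0`, `∫ρ = N`, and `ρ` has finite first moment, then there is a
constant `A_ρ = C(∫e^{−|r|/2}dr)^N + ∫|r|ρ(r)dr` (with `C` the universal constant in
`|z log z| ≤ C√z` on `[0,1]`), depending only on `ρ`, such that for every probability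
density `π ∈ L¹(ℝ^{dN})` with all marginals equal to `ρ/N`, the negative part of
`π log π` has integral bounded: `∫(π log π)_− ≥ −A_ρ`. -/
theorem entropy_negative_part_bound
    {d N : ℕ} (ρ : EuclideanSpace ℝ (Fin d) → ℝ)
    (hρm : Measurable ρ) (hρ0 : ∀ r, 0 ≤ ρ r) (hρint : Integrable ρ)
    (hρN : ∫ r, ρ r = N)
    (hmom : Integrable fun r : EuclideanSpace ℝ (Fin d) => ‖r‖ * ρ r) :
    ∃ C : ℝ, 0 ≤ C ∧ (∀ z ∈ Set.Icc (0 : ℝ) 1, |z * Real.log z| ≤ C * Real.sqrt z) ∧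
      ∀ π : (Fin N → EuclideanSpace ℝ (Fin d)) → ℝ,
        Measurable π → (∀ x, 0 ≤ π x) → Integrable π →
        IsProbabilityMeasure (volume.withDensity fun x => ENNReal.ofReal (π x)) →
        (∀ i : Fin N, (volume.withDensity fun x => ENNReal.ofReal (π x)).map
            (fun x => x i) = volume.withDensity fun r => ENNReal.ofReal (ρ r / N)) →
        ∫⁻ x, ENNReal.ofReal (-min (π x * Real.log (π x)) 0)
          ≤ ENNReal.ofReal
              (C * (∫ r : EuclideanSpace ℝ (Fin d), Real.exp (-‖r‖ / 2)) ^ N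
                + ∫ r : EuclideanSpace ℝ (Fin d), ‖r‖ * ρ r) := by
  classical
  refine ⟨2, by norm_num, fun z hz => aux_zlogz hz.1 hz.2, ?_⟩
  intro π hπm hπ0 hπint hπprob hmarg
  let E := EuclideanSpace ℝ (Fin d)
  set I : ℝ := ∫ r : E, Real.exp (-‖r‖ / 2) with hIdef
  set M : ℝ := ∫ r : E, ‖r‖ * ρ r with hMdef
  have hInn : 0 ≤ I := integral_nonneg fun r => (Real.exp_pos _).le
  have hMnn : 0 ≤ M := integral_nonneg fun r => mul_nonneg (norm_nonneg _) (hρ0 r)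
  have hgint : Integrable (fun r : E => Real.exp (-‖r‖ / 2)) := aux_exp_integrable d
  set G : (Fin N → E) → ℝ := fun x => ∏ i, Real.exp (-‖x i‖ / 2) with hGdef
  have hGint : Integrable G :=
    Integrable.fintype_prod (f := fun _ : Fin N => fun r : E => Real.exp (-‖r‖ / 2))
      (fun _ => hgint)
  have hGval : ∫ x, G x = I ^ N := by
    rw [hGdef]
    show ∫ x : Fin N → E, ∏ i, Real.exp (-‖x i‖ / 2) ∂(Measure.pi fun _ => volume) = I ^ N
    rw [integral_fintype_prod_eq_pow (fun r : E => Real.exp (-‖r‖ / 2)), Fintype.card_fin]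
  set S : (Fin N → E) → ℝ := fun x => ∑ i, ‖x i‖ with hSdef
  have hSm : Measurable S := Finset.measurable_sum _ fun i _ => (measurable_pi_apply i).norm
  have hGm : Measurable G := Finset.measurable_prod _ fun i _ =>
    (((measurable_pi_apply i).norm.neg.div_const 2).exp)
  have hGnn : ∀ x, 0 ≤ G x := fun x => Finset.prod_nonneg fun i _ => (Real.exp_pos _).le
  have hSnn : ∀ x, 0 ≤ S x := fun x => Finset.sum_nonneg fun i _ => norm_nonneg _
  have hGalt : ∀ x, G x = Real.exp (-(S x) / 2) := by
    intro x
    rw [show S x = ∑ i, ‖x i‖ from rfl, show G x = ∏ i, Real.exp (-‖x i‖ / 2) from rfl,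
      ← Real.exp_sum]
    congr 1
    rw [← Finset.sum_div]
    congr 1
    rw [← Finset.sum_neg_distrib]
  have hpt : ∀ x, ENNReal.ofReal (-min (π x * Real.log (π x)) 0)
      ≤ ENNReal.ofReal (2 * G x) + ENNReal.ofReal (π x * S x) := by
    intro x
    rw [← ENNReal.ofReal_add (mul_nonneg (by norm_num) (hGnn x)) (mul_nonneg (hπ0 x) (hSnn x))]
    apply ENNReal.ofReal_le_ofReal
    have := aux_point (hπ0 x) (hSnn x)
    rw [hGalt x]
    exact this
  have hmeas2 : ∀ i : Fin N, Measurable fun x : Fin N → E =>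
      ENNReal.ofReal (π x) * ENNReal.ofReal ‖x i‖ := fun i =>
    hπm.ennreal_ofReal.mul ((measurable_pi_apply i).norm.ennreal_ofReal)
  -- marginal computation
  have key : ∀ i : Fin N, ∫⁻ x, ENNReal.ofReal (π x) * ENNReal.ofReal ‖x i‖
      = ENNReal.ofReal (M / N) := by
    intro i
    have h1 : ∫⁻ x, ENNReal.ofReal ‖x i‖
          ∂(volume.withDensity fun x => ENNReal.ofReal (π x))
        = ∫⁻ x, ENNReal.ofReal (π x) * ENNReal.ofReal ‖x i‖ :=
      lintegral_withDensity_eq_lintegral_mul volume hπm.ennreal_ofReal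
        ((measurable_pi_apply i).norm.ennreal_ofReal)
    have h2 : ∫⁻ r : E, ENNReal.ofReal ‖r‖
          ∂((volume.withDensity fun x => ENNReal.ofReal (π x)).map (fun x => x i))
        = ∫⁻ x, ENNReal.ofReal ‖x i‖
          ∂(volume.withDensity fun x => ENNReal.ofReal (π x)) :=
      lintegral_map measurable_norm.ennreal_ofReal (measurable_pi_apply i)
    rw [← h1, ← h2, hmarg i,
      lintegral_withDensity_eq_lintegral_mul volume (hρm.div_const _).ennreal_ofReal
        measurable_norm.ennreal_ofReal]
    have h3 : ∫⁻ r : E, (((fun r : E => ENNReal.ofReal (ρ r / N)) * fun r : E => ENNReal.ofReal ‖r‖) r)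
        = ∫⁻ r : E, ENNReal.ofReal (‖r‖ * ρ r / N) := by
      apply lintegral_congr
      intro r
      simp only [Pi.mul_apply]
      rw [← ENNReal.ofReal_mul (div_nonneg (hρ0 r) (Nat.cast_nonneg N))]
      congr 1
      ring
    rw [h3]
    rw [← ofReal_integral_eq_lintegral_ofReal (hmom.div_const N)
      (Filter.Eventually.of_forall fun r =>
        div_nonneg (mul_nonneg (norm_nonneg _) (hρ0 r)) (Nat.cast_nonneg N))]
    rw [integral_div]
  have term2 : ∫⁻ x, ENNReal.ofReal (π x * S x) ≤ ENNReal.ofReal M := by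
    have hsplit : ∀ x, ENNReal.ofReal (π x * S x)
        = ∑ i : Fin N, ENNReal.ofReal (π x) * ENNReal.ofReal ‖x i‖ := by
      intro x
      rw [ENNReal.ofReal_mul (hπ0 x), show S x = ∑ i, ‖x i‖ from rfl,
        ENNReal.ofReal_sum_of_nonneg fun i _ => norm_nonneg _, Finset.mul_sum]
    simp_rw [hsplit]
    rw [lintegral_finset_sum _ fun i _ => hmeas2 i]
    rw [Finset.sum_congr rfl fun i _ => key i]
    rw [Finset.sum_const, Finset.card_univ, Fintype.card_fin, nsmul_eq_mul]
    rcases Nat.eq_zero_or_pos N with hN | hN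
    · subst hN; simp
    · have hNne : (N : ℝ) ≠ 0 := Nat.cast_ne_zero.2 hN.ne'
      rw [show ((N : ℕ) : ℝ≥0∞) = ENNReal.ofReal (N : ℝ) by simp,
        ← ENNReal.ofReal_mul (Nat.cast_nonneg N), mul_div_cancel₀ M hNne]
  have term1 : ∫⁻ x, ENNReal.ofReal (2 * G x) = ENNReal.ofReal (2 * I ^ N) := by
    rw [← ofReal_integral_eq_lintegral_ofReal (hGint.const_mul 2)
      (Filter.Eventually.of_forall fun x => mul_nonneg (by norm_num) (hGnn x))]
    rw [integral_const_mul, hGval]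
  calc ∫⁻ x, ENNReal.ofReal (-min (π x * Real.log (π x)) 0)
      ≤ ∫⁻ x, (ENNReal.ofReal (2 * G x) + ENNReal.ofReal (π x * S x)) :=
        lintegral_mono hpt
    _ = (∫⁻ x, ENNReal.ofReal (2 * G x)) + ∫⁻ x, ENNReal.ofReal (π x * S x) :=
        lintegral_add_left ((hGm.const_mul 2).ennreal_ofReal) _
    _ ≤ ENNReal.ofReal (2 * I ^ N) + ENNReal.ofReal M := by
        rw [term1]; exact add_le_add_right term2 _
    _ = ENNReal.ofReal (2 * I ^ N + M) :=
        (ENNReal.ofReal_add (by positivity) hMnn).symm
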